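/- Let f:(0,∞)→(0,∞) and define the perspective g(x,y)=y·f(x/y) for x,y>0. Then f is GG-convex if and only if g is jointly GG-convex, i.e., g(a^α b^{1-α}, x^α y^{1-α}) ≤ g(a,x)^α g(b,y)^{1-α} for all a,b,x,y>0 and α∈[0,1]. -/
import Mathlib


theorem perspective_gg_convex_iff (f : ℝ → ℝ) (hf : ∀ x ∈ Set.Ioi (0:ℝ), 0 < f x)
    (g : ℝ → ℝ → ℝ) (hg : ∀ x y : ℝ, g x y = y * f (x / y)) :
    (∀ u ∈ Set.Ioi (0:ℝ), ∀ v ∈ Set.Ioi (0:ℝ), ∀ α ∈ Set.Icc (0:ℝ) 1,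
      f (u ^ α * v ^ (1 - α)) ≤ f u ^ α * f v ^ (1 - α)) ↔
    (∀ a ∈ Set.Ioi (0:ℝ), ∀ b ∈ Set.Ioi (0:ℝ), ∀ x ∈ Set.Ioi (0:ℝ), ∀ y ∈ Set.Ioi (0:ℝ),
      ∀ α ∈ Set.Icc (0:ℝ) 1,
      g (a ^ α * b ^ (1 - α)) (x ^ α * y ^ (1 - α)) ≤ g a x ^ α * g b y ^ (1 - α)) := by
  constructor
  · intro h a ha b hb x hx y hy α hα
    rw [hg, hg, hg]
    have hx0 : (0:ℝ) < x := hx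
    have hy0 : (0:ℝ) < y := hy
    have ha0 : (0:ℝ) < a := ha
    have hb0 : (0:ℝ) < b := hb
    have hdiv : a ^ α * b ^ (1 - α) / (x ^ α * y ^ (1 - α))
        = (a / x) ^ α * (b / y) ^ (1 - α) := by
      rw [Real.div_rpow ha0.le hx0.le, Real.div_rpow hb0.le hy0.le]
      field_simp
    rw [hdiv]
    have hfa : 0 < f (a / x) := hf _ (div_pos ha0 hx0)
    have hfb : 0 < f (b / y) := hf _ (div_pos hb0 hy0)
    have key := h _ (Set.mem_Ioi.2 (div_pos ha0 hx0)) _ (Set.mem_Ioi.2 (div_pos hb0 hy0)) α hα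
    have hxy : 0 < x ^ α * y ^ (1 - α) :=
      mul_pos (Real.rpow_pos_of_pos hx0 _) (Real.rpow_pos_of_pos hy0 _)
    calc x ^ α * y ^ (1 - α) * f ((a / x) ^ α * (b / y) ^ (1 - α))
        ≤ x ^ α * y ^ (1 - α) * (f (a / x) ^ α * f (b / y) ^ (1 - α)) := by
          exact mul_le_mul_of_nonneg_left key hxy.le
      _ = (x * f (a / x)) ^ α * (y * f (b / y)) ^ (1 - α) := by
          rw [Real.mul_rpow hx0.le hfa.le, Real.mul_rpow hy0.le hfb.le]
          ring
  · intro h u hu v hv α hα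
    have := h u hu v hv 1 (by norm_num) 1 (by norm_num) α hα
    simpa [hg, Real.one_rpow] using this
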